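/- Let Δ₁, ..., Δ_s be a dissection of a d-dimensional polytope P ⊂ ℝⁿ into d-simplices (interior-disjoint simplices whose union is P), and let q ∈ P be a point in general position with respect to the dissection (q lies on no facet-defining hyperplane of any Δᵢ). Then P is the disjoint union of the half-open simplices H_q(Δ₁), ..., H_q(Δ_s), where H_q(Δ) is Δ with all facets visible from q removed. -/

import Mathlib

open Set Pointwise

noncomputable section

/-- A point `x ≠ q` of a set `Δ` is visible from `q` if the open segment `(x, q)`
is disjoint from `Δ`. -/
def visibleFrom {n : ℕ} (q : Fin n → ℝ) (Δ : Set (Fin n → ℝ)) (x : Fin n → ℝ) : Prop :=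
  x ≠ q ∧ openSegment ℝ x q ∩ Δ = ∅

/-- The simplex on vertices `p`. -/
def simplexOf {n d : ℕ} (p : Fin (d + 1) → (Fin n → ℝ)) : Set (Fin n → ℝ) :=
  convexHull ℝ (Set.range p)

/-- The facet of the simplex on vertices `p` opposite the vertex `i`. -/
def facetOf {n d : ℕ} (p : Fin (d + 1) → (Fin n → ℝ)) (i : Fin (d + 1)) : Set (Fin n → ℝ) :=
  convexHull ℝ (p '' {i}ᶜ)

/-- The half-open simplex: the simplex on vertices `p` with all facets visible from `q`
removed. -/
def halfOpen {n d : ℕ} (q : Fin n → ℝ) (p : Fin (d + 1) → (Fin n → ℝ)) : Set (Fin n → ℝ) :=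
  simplexOf p \ ⋃ i ∈ {i : Fin (d + 1) | ∀ x ∈ facetOf p i, visibleFrom q (simplexOf p) x},
    facetOf p i


lemma exists_coords {n d : ℕ} {p : Fin (d + 1) → (Fin n → ℝ)} (hp : AffineIndependent ℝ p) :
    ∃ c : Fin (d + 1) → ((Fin n → ℝ) →ᵃ[ℝ] ℝ),
      (∀ i, Continuous (c i)) ∧
      ∀ w : Fin (d + 1) → ℝ, ∑ k, w k = 1 → ∀ i, c i (∑ k, w k • p k) = w i := by
  classical
  obtain ⟨t, hst, hti, htt⟩ :=
    exists_subset_affineIndependent_affineSpan_eq_top hp.range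
  have htt' : affineSpan ℝ (Set.range ((↑) : t → (Fin n → ℝ))) = ⊤ := by
    rwa [Subtype.range_coe]
  let b : AffineBasis t ℝ (Fin n → ℝ) := ⟨(↑), hti, htt'⟩
  have hpe : ∀ i, p i ∈ t := fun i => hst (Set.mem_range_self i)
  have hinj : Function.Injective (fun i => (⟨p i, hpe i⟩ : t)) := by
    intro i j hij
    exact hp.injective (by simpa [Subtype.ext_iff] using hij)
  let e : Fin (d + 1) ↪ t := ⟨fun i => ⟨p i, hpe i⟩, hinj⟩
  refine ⟨fun i => b.coord (e i), fun i => AffineMap.continuous_of_finiteDimensional _, ?_⟩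
  intro w hw i
  set w' : t → ℝ := Function.extend e w 0 with hw'def
  have hwe : ∀ k, w' (e k) = w k := fun k => hinj.extend_apply w 0 k
  have hsum : ∑ u ∈ Finset.univ.map e, w' u = 1 := by
    rw [Finset.sum_map]
    simpa [hwe] using hw
  have hcombo : (Finset.univ.map e).affineCombination ℝ b w' = ∑ k, w k • p k := by
    rw [Finset.affineCombination_map, Finset.affineCombination_eq_linear_combination]
    · apply Finset.sum_congr rfl
      intro k _
      simp only [Function.comp_apply, hwe]
      rfl
    · simpa [Function.comp_def, hwe] using hw
  have hco := b.coord_apply_combination_of_mem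
    (Finset.mem_map_of_mem e (Finset.mem_univ i)) hsum
  rw [hcombo] at hco
  rw [hco, hwe]

section Coords

variable {n d : ℕ} {p : Fin (d + 1) → (Fin n → ℝ)} {c : Fin (d + 1) → ((Fin n → ℝ) →ᵃ[ℝ] ℝ)}

lemma span_rep (hc : ∀ w : Fin (d + 1) → ℝ, ∑ k, w k = 1 → ∀ i, c i (∑ k, w k • p k) = w i)
    {z : Fin n → ℝ} (hz : z ∈ affineSpan ℝ (Set.range p)) :
    (∑ k, c k z = 1) ∧ z = ∑ k, c k z • p k := by
  obtain ⟨w, hw, rfl⟩ := eq_affineCombination_of_mem_affineSpan_of_fintype hz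
  rw [Finset.affineCombination_eq_linear_combination _ _ _ hw]
  have h : ∀ i, c i (∑ k, w k • p k) = w i := hc w hw
  constructor
  · simp only [h]; exact hw
  · congr 1; ext k; rw [h k]

lemma mem_simplex_iff (hc : ∀ w : Fin (d + 1) → ℝ, ∑ k, w k = 1 → ∀ i, c i (∑ k, w k • p k) = w i)
    {z : Fin n → ℝ} :
    z ∈ simplexOf p ↔ z ∈ affineSpan ℝ (Set.range p) ∧ ∀ i, 0 ≤ c i z := by
  classical
  constructor
  · intro hz
    have hzs : z ∈ affineSpan ℝ (Set.range p) :=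
      (convexHull_subset_affineSpan _) hz
    refine ⟨hzs, ?_⟩
    rw [simplexOf, convexHull_range_eq_exists_affineCombination] at hz
    obtain ⟨s, w, hw₀, hw₁, rfl⟩ := hz
    rw [Finset.affineCombination_indicator_subset w p (Finset.subset_univ s)]
    have hsum : ∑ k, Set.indicator ↑s w k = 1 := by
      first
      | exact (Finset.sum_indicator_subset w (Finset.subset_univ s)).symm.trans hw₁
      | exact (Finset.sum_indicator_subset w (Finset.subset_univ s)).trans hw₁
    rw [Finset.affineCombination_eq_linear_combination _ _ _ hsum]
    intro i
    rw [hc _ hsum i]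
    by_cases hi : i ∈ s
    · rw [Set.indicator_of_mem (by simpa using hi)]; exact hw₀ i hi
    · rw [Set.indicator_of_notMem (by simpa using hi)]
  · rintro ⟨hzs, hnn⟩
    obtain ⟨hsum, hrep⟩ := span_rep hc hzs
    rw [hrep]
    rw [← Finset.affineCombination_eq_linear_combination _ _ _ hsum]
    exact affineCombination_mem_convexHull (fun i _ => hnn i) hsum

lemma coord_vertex (hc : ∀ w : Fin (d + 1) → ℝ, ∑ k, w k = 1 → ∀ i, c i (∑ k, w k • p k) = w i)
    (i k : Fin (d + 1)) : c i (p k) = if i = k then 1 else 0 := by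
  classical
  set w : Fin (d + 1) → ℝ := fun m => if m = k then (1:ℝ) else 0 with hw
  have h1 : ∑ m, w m = 1 := by simp [hw]
  have h2 : ∑ m, w m • p m = p k := by
    simp [hw, ite_smul]
  have := hc w h1 i
  rw [h2] at this
  rw [this]

lemma mem_facet_iff (hc : ∀ w : Fin (d + 1) → ℝ, ∑ k, w k = 1 → ∀ i, c i (∑ k, w k • p k) = w i)
    {z : Fin n → ℝ} {i : Fin (d + 1)} :
    z ∈ facetOf p i ↔ z ∈ simplexOf p ∧ c i z = 0 := by
  classical
  constructor
  · intro hz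
    refine ⟨convexHull_mono (Set.image_subset_range _ _) hz, ?_⟩
    have himg : c i z ∈ (c i) '' (convexHull ℝ (p '' {i}ᶜ)) := Set.mem_image_of_mem _ hz
    rw [AffineMap.image_convexHull] at himg
    have hsub : (c i) '' (p '' {i}ᶜ) ⊆ {(0:ℝ)} := by
      rintro - ⟨-, ⟨k, hk, rfl⟩, rfl⟩
      have hki : i ≠ k := by
        simp only [Set.mem_compl_iff, Set.mem_singleton_iff] at hk
        exact fun h => hk h.symm
      have : c i (p k) = 0 := by rw [coord_vertex hc, if_neg hki]
      simp [this]
    have := convexHull_mono hsub himg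
    rwa [convexHull_singleton, Set.mem_singleton_iff] at this
  · rintro ⟨hzs, hzi⟩
    obtain ⟨hspan, hnn⟩ := (mem_simplex_iff hc).mp hzs
    obtain ⟨hsum, hrep⟩ := span_rep hc hspan
    have hsum' : ∑ k ∈ Finset.univ.erase i, c k z = 1 := by
      have : ∑ k ∈ Finset.univ.erase i, c k z = ∑ k, c k z :=
        Finset.sum_erase _ hzi
      rw [this]; exact hsum
    have hsum_eq : ∑ k ∈ Finset.univ.erase i, c k z • p k = ∑ k, c k z • p k :=
      Finset.sum_erase _ (by rw [hzi, zero_smul])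
    have hrep' : z = (Finset.univ.erase i).centerMass (fun k => c k z) p := by
      rw [Finset.centerMass_eq_of_sum_1 _ _ hsum', hsum_eq]
      exact hrep
    rw [hrep']
    refine Finset.centerMass_mem_convexHull _ (fun k _ => hnn k) (by rw [hsum']; norm_num) ?_
    intro k hk
    exact Set.mem_image_of_mem p (by simpa using (Finset.mem_erase.mp hk).1)

lemma mem_facetSpan (hc : ∀ w : Fin (d + 1) → ℝ, ∑ k, w k = 1 → ∀ i, c i (∑ k, w k • p k) = w i)
    {z : Fin n → ℝ} {i : Fin (d + 1)} (hspan : z ∈ affineSpan ℝ (Set.range p))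
    (hzi : c i z = 0) : z ∈ affineSpan ℝ (p '' {i}ᶜ) := by
  classical
  obtain ⟨hsum, hrep⟩ := span_rep hc hspan
  haveI : Fintype ↥({i}ᶜ : Set (Fin (d + 1))) := Fintype.ofFinite _
  have himg : p '' {i}ᶜ = Set.range (fun k : ↥({i}ᶜ : Set (Fin (d + 1))) => p ↑k) := by
    rw [Set.image_eq_range]
  have hsub : ∀ (f : Fin (d + 1) → (Fin n → ℝ)),
      ∑ k : ↥({i}ᶜ : Set (Fin (d + 1))), f ↑k = ∑ k ∈ Finset.univ.erase i, f k := by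
    intro f
    exact (Finset.sum_subtype (Finset.univ.erase i)
      (fun x => by simp [Set.mem_compl_singleton_iff]) f).symm
  have hsub' : ∀ (f : Fin (d + 1) → ℝ),
      ∑ k : ↥({i}ᶜ : Set (Fin (d + 1))), f ↑k = ∑ k ∈ Finset.univ.erase i, f k := by
    intro f
    exact (Finset.sum_subtype (Finset.univ.erase i)
      (fun x => by simp [Set.mem_compl_singleton_iff]) f).symm
  have hsum_eq : ∑ k ∈ Finset.univ.erase i, c k z = ∑ k, c k z :=
    Finset.sum_erase _ hzi
  have hsum_eq2 : ∑ k ∈ Finset.univ.erase i, c k z • p k = ∑ k, c k z • p k :=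
    Finset.sum_erase _ (by rw [hzi, zero_smul])
  have hsum' : ∑ k : ↥({i}ᶜ : Set (Fin (d + 1))), c ↑k z = 1 := by
    rw [hsub' (fun k => c k z), hsum_eq]; exact hsum
  have hcombo : z = Finset.univ.affineCombination ℝ (fun k : ↥({i}ᶜ : Set (Fin (d + 1))) => p ↑k)
      (fun k => c ↑k z) := by
    rw [Finset.affineCombination_eq_linear_combination _ _ _ hsum']
    rw [hsub (fun k => c k z • p k), hsum_eq2]
    exact hrep
  rw [himg, hcombo]
  exact affineCombination_mem_affineSpan hsum' _

lemma pos_mem_intrinsicInterior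
    (hcont : ∀ i, Continuous (c i))
    (hc : ∀ w : Fin (d + 1) → ℝ, ∑ k, w k = 1 → ∀ i, c i (∑ k, w k • p k) = w i)
    {z : Fin n → ℝ} (hspan : z ∈ affineSpan ℝ (Set.range p)) (hpos : ∀ i, 0 < c i z) :
    z ∈ intrinsicInterior ℝ (simplexOf p) := by
  have hA : affineSpan ℝ (simplexOf p) = affineSpan ℝ (Set.range p) := affineSpan_convexHull _
  have hzA : z ∈ affineSpan ℝ (simplexOf p) := by rw [hA]; exact hspan
  refine ⟨⟨z, hzA⟩, ?_, rfl⟩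
  rw [mem_interior_iff_mem_nhds]
  have hU : IsOpen {u : affineSpan ℝ (simplexOf p) | ∀ i, 0 < c i ↑u} := by
    have h1 : {u : affineSpan ℝ (simplexOf p) | ∀ i, 0 < c i ↑u} =
        ⋂ i, (fun u : affineSpan ℝ (simplexOf p) => c i ↑u) ⁻¹' (Set.Ioi 0) := by
      ext u; simp [Set.mem_iInter, Set.mem_preimage]
    rw [h1]
    exact isOpen_iInter_of_finite fun i =>
      (isOpen_Ioi).preimage ((hcont i).comp continuous_subtype_val)
  apply Filter.mem_of_superset (hU.mem_nhds (by exact hpos))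
  rintro u hu
  show ↑u ∈ simplexOf p
  refine (mem_simplex_iff hc).mpr ⟨?_, fun i => (hu i).le⟩
  rw [← hA]
  exact u.2

lemma facet_visible
    (hc : ∀ w : Fin (d + 1) → ℝ, ∑ k, w k = 1 → ∀ i, c i (∑ k, w k • p k) = w i)
    {q : Fin n → ℝ} {i : Fin (d + 1)} (hneg : c i q < 0) :
    ∀ y ∈ facetOf p i, visibleFrom q (simplexOf p) y := by
  intro y hy
  obtain ⟨hyS, hyi⟩ := (mem_facet_iff hc).mp hy
  refine ⟨fun h => absurd (h ▸ hyi) hneg.ne, ?_⟩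
  rw [Set.eq_empty_iff_forall_notMem]
  rintro u ⟨huseg, huS⟩
  rw [openSegment_eq_image_lineMap] at huseg
  obtain ⟨t, ht, rfl⟩ := huseg
  have h1 : c i (AffineMap.lineMap y q t) = t • (c i q - c i y) + c i y := by
    rw [AffineMap.apply_lineMap, AffineMap.lineMap_apply_module']
  have h2 : 0 ≤ c i (AffineMap.lineMap y q t) := ((mem_simplex_iff hc).mp huS).2 i
  rw [h1, hyi] at h2
  simp only [smul_eq_mul, sub_zero, add_zero] at h2
  nlinarith [ht.1, ht.2, hneg]

lemma eps_intrinsic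
    (hcont : ∀ i, Continuous (c i))
    (hc : ∀ w : Fin (d + 1) → ℝ, ∑ k, w k = 1 → ∀ i, c i (∑ k, w k • p k) = w i)
    {q x : Fin n → ℝ}
    (hqspan : q ∈ affineSpan ℝ (Set.range p)) (hqne : ∀ i, c i q ≠ 0)
    (hx : x ∈ halfOpen q p) :
    ∃ ε₀ > 0, ∀ ε ∈ Set.Ioo (0:ℝ) ε₀,
      AffineMap.lineMap x q ε ∈ intrinsicInterior ℝ (simplexOf p) := by
  classical
  obtain ⟨hxS, hxU⟩ := hx
  obtain ⟨hxspan, hnn⟩ := (mem_simplex_iff hc).mp hxS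
  have hposneg : ∀ k, c k q < 0 → 0 < c k x := by
    intro k hk
    rcases (hnn k).lt_or_eq with h | h
    · exact h
    · exfalso
      apply hxU
      have hkvis : k ∈ {i : Fin (d + 1) |
          ∀ y ∈ facetOf p i, visibleFrom q (simplexOf p) y} := facet_visible hc hk
      exact Set.mem_biUnion hkvis ((mem_facet_iff hc).mpr ⟨hxS, h.symm⟩)
  set f : Fin (d + 1) → ℝ := fun k =>
    if c k q < 0 then c k x / (c k x - c k q) else 1 with hf
  have hfpos : ∀ k, 0 < f k := by
    intro k
    rw [hf]
    dsimp only
    split_ifs with hk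
    · exact div_pos (hposneg k hk) (by linarith [hposneg k hk])
    · norm_num
  refine ⟨Finset.univ.inf' Finset.univ_nonempty f,
    (Finset.lt_inf'_iff _).mpr fun k _ => hfpos k, ?_⟩
  rintro ε ⟨hε0, hεlt⟩
  have hεf : ∀ k, ε < f k := fun k =>
    lt_of_lt_of_le hεlt (Finset.inf'_le _ (Finset.mem_univ k))
  have hzspan : AffineMap.lineMap x q ε ∈ affineSpan ℝ (Set.range p) :=
    AffineMap.lineMap_mem ε hxspan hqspan
  apply pos_mem_intrinsicInterior hcont hc hzspan
  intro k
  have hck : c k (AffineMap.lineMap x q ε) = ε * (c k q - c k x) + c k x := by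
    rw [AffineMap.apply_lineMap, AffineMap.lineMap_apply_module', smul_eq_mul]
  rw [hck]
  have hεfk := hεf k
  rw [hf] at hεfk
  dsimp only at hεfk
  split_ifs at hεfk with hk
  · have ha := hposneg k hk
    have h1 : (0:ℝ) < c k x - c k q := by linarith
    have h2 : ε * (c k x - c k q) < c k x := (lt_div_iff₀ h1).mp hεfk
    linarith
  · have hkpos : 0 < c k q := (hqne k).lt_or_gt.resolve_left hk
    nlinarith [hnn k, hε0, hεfk]

end Coords

lemma span_eq_of_cover {n d s : ℕ} {P : Set (Fin n → ℝ)} (hP : Convex ℝ P)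
    {p : Fin s → Fin (d + 1) → (Fin n → ℝ)}
    (hind : ∀ j, AffineIndependent ℝ (p j))
    (hcover : ⋃ j, simplexOf (p j) = P) (hne : P.Nonempty) :
    ∀ j, affineSpan ℝ (Set.range (p j)) = affineSpan ℝ P := by
  classical
  have hjex : Nonempty (Fin s) := by
    obtain ⟨x, hx⟩ := hne
    rw [← hcover] at hx
    obtain ⟨j, -⟩ := Set.mem_iUnion.mp hx
    exact ⟨j⟩
  have hΔP : ∀ j, simplexOf (p j) ⊆ P := by
    intro j
    rw [← hcover]
    exact Set.subset_iUnion (fun j => simplexOf (p j)) j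
  have hle : ∀ j, affineSpan ℝ (Set.range (p j)) ≤ affineSpan ℝ P := by
    intro j
    apply affineSpan_le.mpr
    intro u hu
    exact subset_affineSpan ℝ P (hΔP j (subset_convexHull ℝ _ hu))
  obtain ⟨z, hz⟩ := Set.Nonempty.intrinsicInterior hP hne
  obtain ⟨y, hy_int, rfl⟩ := hz
  rw [mem_interior_iff_mem_nhds, mem_nhds_subtype] at hy_int
  obtain ⟨t, ht, hts⟩ := hy_int
  obtain ⟨ε, hε, hball⟩ := Metric.mem_nhds_iff.mp ht
  have hballP : ∀ v : Fin n → ℝ, v ∈ affineSpan ℝ P → dist v ↑y < ε → v ∈ P := by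
    intro v hv hd
    exact hts (Set.mem_preimage.mpr (hball hd) : (⟨v, hv⟩ : affineSpan ℝ P) ∈ _)
  have hdir : ∀ v ∈ (affineSpan ℝ P).direction,
      ∃ j, v ∈ (affineSpan ℝ (Set.range (p j))).direction := by
    intro v hv
    by_cases hv0 : v = 0
    · exact ⟨Classical.arbitrary _, by rw [hv0]; exact zero_mem _⟩
    have hvnorm : 0 < ‖v‖ := norm_pos_iff.mpr hv0
    have hT : (Set.Ioo (0:ℝ) (ε/‖v‖)).Infinite := Set.Ioo_infinite (by positivity)
    have hTsub : ∀ t' ∈ Set.Ioo (0:ℝ) (ε/‖v‖), ∃ j, (t' • v + ↑y) ∈ simplexOf (p j) := by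
      intro t' ht'
      have hmem : t' • v + ↑y ∈ affineSpan ℝ P := by
        have := AffineSubspace.vadd_mem_of_mem_direction
          (Submodule.smul_mem _ t' hv) y.2
        rwa [vadd_eq_add] at this
      have hdist : dist (t' • v + ↑y) ↑y < ε := by
        rw [dist_eq_norm, add_sub_cancel_right, norm_smul, Real.norm_eq_abs,
          abs_of_pos ht'.1]
        calc t' * ‖v‖ < (ε/‖v‖) * ‖v‖ := by
              exact mul_lt_mul_of_pos_right ht'.2 hvnorm
          _ = ε := by field_simp
      have hP' := hballP _ hmem hdist
      exact Set.mem_iUnion.mp ((Set.ext_iff.mp hcover _).mpr hP')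
    choose! g hg using hTsub
    have hpig : ∃ j, {t' ∈ Set.Ioo (0:ℝ) (ε/‖v‖) | g t' = j}.Infinite := by
      by_contra h
      push_neg at h
      apply hT
      have hsub : Set.Ioo (0:ℝ) (ε/‖v‖) ⊆
          ⋃ j, {t' ∈ Set.Ioo (0:ℝ) (ε/‖v‖) | g t' = j} :=
        fun t' ht' => Set.mem_iUnion.mpr ⟨g t', ht', rfl⟩
      exact Set.Finite.subset (Set.finite_iUnion h) hsub
    obtain ⟨j, hjinf⟩ := hpig
    obtain ⟨t₁, ht₁, t₂, ht₂, hne'⟩ := hjinf.nontrivial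
    refine ⟨j, ?_⟩
    have h1 : (t₁ • v + ↑y) ∈ affineSpan ℝ (Set.range (p j)) := by
      have := hg t₁ ht₁.1
      rw [ht₁.2] at this
      exact (convexHull_subset_affineSpan _) this
    have h2 : (t₂ • v + ↑y) ∈ affineSpan ℝ (Set.range (p j)) := by
      have := hg t₂ ht₂.1
      rw [ht₂.2] at this
      exact (convexHull_subset_affineSpan _) this
    have hvd := AffineSubspace.vsub_mem_direction h1 h2
    have heq : (t₁ • v + ↑y) -ᵥ (t₂ • v + ↑y) = (t₁ - t₂) • v := by
      rw [vsub_eq_sub, sub_smul]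
      abel
    rw [heq] at hvd
    have : v = (t₁ - t₂)⁻¹ • ((t₁ - t₂) • v) := by
      rw [smul_smul, inv_mul_cancel₀ (sub_ne_zero.mpr hne'), one_smul]
    rw [this]
    exact Submodule.smul_mem _ _ hvd
  set W := (affineSpan ℝ P).direction with hW
  let subJ : Fin s → Subspace ℝ ↥W := fun j =>
    Submodule.comap W.subtype ((affineSpan ℝ (Set.range (p j))).direction)
  have hcov : ⋃ j, (subJ j : Set ↥W) = Set.univ := by
    ext ⟨v, hv⟩
    simp only [Set.mem_univ, iff_true, Set.mem_iUnion, SetLike.mem_coe,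
      Submodule.mem_comap, Submodule.subtype_apply]
    exact hdir v hv
  obtain ⟨j₀, hj₀⟩ := Subspace.exists_eq_top_of_iUnion_eq_univ hcov
  have hWle : W ≤ (affineSpan ℝ (Set.range (p j₀))).direction := by
    intro w hw
    have h1 : (⟨w, hw⟩ : ↥W) ∈ subJ j₀ := by rw [hj₀]; trivial
    exact h1
  have hdirle : ∀ j, (affineSpan ℝ (Set.range (p j))).direction ≤ W :=
    fun j => AffineSubspace.direction_le (hle j)
  have hfr : ∀ j, Module.finrank ℝ ((affineSpan ℝ (Set.range (p j))).direction) = d := by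
    intro j
    rw [direction_affineSpan]
    exact (hind j).finrank_vectorSpan (by simp)
  have h0 : (affineSpan ℝ (Set.range (p j₀))).direction = W :=
    le_antisymm (hdirle j₀) hWle
  have hW_eq : ∀ j, (affineSpan ℝ (Set.range (p j))).direction = W := by
    intro j
    apply Submodule.eq_of_le_of_finrank_eq (hdirle j)
    rw [hfr j, ← h0, hfr j₀]
  intro j
  refine AffineSubspace.ext_of_direction_eq ?_ ⟨p j 0, ?_, ?_⟩
  · rw [hW_eq j, hW]
  · exact subset_affineSpan ℝ _ (Set.mem_range_self 0)
  · exact subset_affineSpan ℝ P (hΔP j (subset_convexHull ℝ _ (Set.mem_range_self 0)))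

/-- for a dissection of a polytope `P` into `d`-simplices and a point `q ∈ P`
in general position, the half-open simplices `H_q(Δ₁), …, H_q(Δ_s)` partition `P`. -/
theorem stmt2 {n d s : ℕ} (P : Set (Fin n → ℝ)) (hP : Convex ℝ P)
    (p : Fin s → Fin (d + 1) → (Fin n → ℝ))
    (hind : ∀ j, AffineIndependent ℝ (p j))
    (hdisj : ∀ j j', j ≠ j' →
      intrinsicInterior ℝ (simplexOf (p j)) ∩ intrinsicInterior ℝ (simplexOf (p j')) = ∅)
    (hcover : ⋃ j, simplexOf (p j) = P)
    (q : Fin n → ℝ) (hqP : q ∈ P)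
    (hgen : ∀ j i, q ∉ (affineSpan ℝ (p j '' {i}ᶜ) : Set (Fin n → ℝ))) :
    ∀ x ∈ P, ∃! j, x ∈ halfOpen q (p j) := by
  classical
  intro x hx
  have hPne : P.Nonempty := ⟨x, hx⟩
  haveI hjex : Nonempty (Fin s) := by
    obtain ⟨x', hx'⟩ := hPne
    rw [← hcover] at hx'
    obtain ⟨j, -⟩ := Set.mem_iUnion.mp hx'
    exact ⟨j⟩
  have hspanEq := span_eq_of_cover hP hind hcover hPne
  choose c hcont hc using fun j => exists_coords (hind j)
  have hqspan : ∀ j, q ∈ affineSpan ℝ (Set.range (p j)) := by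
    intro j
    rw [hspanEq j]
    exact subset_affineSpan ℝ P hqP
  have hqne : ∀ j i, c j i q ≠ 0 := by
    intro j i h0
    exact hgen j i (mem_facetSpan (hc j) (hqspan j) h0)
  -- EXISTENCE
  have hexist : ∃ j, x ∈ halfOpen q (p j) := by
    have happ : ∃ j, ∀ δ : ℝ, 0 < δ → ∃ ε : ℝ, 0 < ε ∧ ε < δ ∧ ε < 1 ∧
        AffineMap.lineMap x q ε ∈ simplexOf (p j) := by
      by_contra h
      push_neg at h
      choose δ hδpos hδ using h
      set δ₀ := min (Finset.univ.inf' Finset.univ_nonempty δ) 1 with hδ₀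
      have hδ₀pos : 0 < δ₀ :=
        lt_min ((Finset.lt_inf'_iff _).mpr fun j _ => hδpos j) one_pos
      set ε := δ₀ / 2 with hε
      have hε0 : 0 < ε := by positivity
      have hεle : ε < δ₀ := by rw [hε]; linarith
      have hε1 : ε < 1 := lt_of_lt_of_le hεle (min_le_right _ _)
      have hεP : AffineMap.lineMap x q ε ∈ P :=
        hP.lineMap_mem hx hqP ⟨hε0.le, hε1.le⟩
      rw [← hcover] at hεP
      obtain ⟨j, hj⟩ := Set.mem_iUnion.mp hεP
      exact hδ j ε hε0
        (lt_of_lt_of_le hεle ((min_le_left _ _).trans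
          (Finset.inf'_le _ (Finset.mem_univ j)))) hε1 hj
    obtain ⟨j, hjap⟩ := happ
    have hclosed : IsClosed (simplexOf (p j)) :=
      (Set.finite_range (p j)).isClosed_convexHull ℝ
    have hseq : ∀ m : ℕ, ∃ ε : ℝ, 0 < ε ∧ ε < 1/(m+1) ∧ ε < 1 ∧
        AffineMap.lineMap x q ε ∈ simplexOf (p j) :=
      fun m => hjap (1/(m+1)) (by positivity)
    choose u hu0 hu1 _hu2 hu3 using hseq
    have hu_t : Filter.Tendsto u Filter.atTop (nhds 0) := by
      apply squeeze_zero (fun m => (hu0 m).le) (fun m => (hu1 m).le)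
      exact tendsto_one_div_add_atTop_nhds_zero_nat
    have hxmem : x ∈ simplexOf (p j) := by
      have hcontline : Continuous (fun ε : ℝ => AffineMap.lineMap x q ε) :=
        (AffineMap.lineMap x q : ℝ →ᵃ[ℝ] (Fin n → ℝ)).continuous_of_finiteDimensional
      have htend : Filter.Tendsto (fun m => AffineMap.lineMap x q (u m))
          Filter.atTop (nhds (AffineMap.lineMap x q (0:ℝ))) :=
        (hcontline.tendsto _).comp hu_t
      rw [AffineMap.lineMap_apply_zero] at htend
      exact hclosed.mem_of_tendsto htend (Filter.Eventually.of_forall hu3)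
    have hsmall : ∀ ε : ℝ, 0 < ε → ε ≤ u 0 →
        AffineMap.lineMap x q ε ∈ simplexOf (p j) := by
      intro ε h1 h2
      have hcvx : Convex ℝ (simplexOf (p j)) := convex_convexHull ℝ _
      have hcomb : AffineMap.lineMap x q ε =
          AffineMap.lineMap x (AffineMap.lineMap x q (u 0)) (ε / u 0) := by
        simp only [AffineMap.lineMap_apply_module']
        rw [add_sub_cancel_right, smul_smul, div_mul_cancel₀ _ (ne_of_gt (hu0 0))]
      rw [hcomb]
      refine hcvx.lineMap_mem hxmem (hu3 0) ⟨div_nonneg h1.le (hu0 0).le, ?_⟩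
      rw [div_le_one (hu0 0)]
      exact h2
    refine ⟨j, hxmem, ?_⟩
    intro hUmem
    rw [Set.mem_iUnion₂] at hUmem
    obtain ⟨i, hivis, hxf⟩ := hUmem
    obtain ⟨hxq, hsegdisj⟩ := hivis x hxf
    set ε' := min (u 0) 2⁻¹ with hε'
    have hε'0 : 0 < ε' := lt_min (hu0 0) (by norm_num)
    have hpt := hsmall ε' hε'0 (min_le_left _ _)
    have hseg : AffineMap.lineMap x q ε' ∈ openSegment ℝ x q := by
      rw [openSegment_eq_image_lineMap]
      exact ⟨ε', ⟨hε'0, lt_of_le_of_lt (min_le_right _ _) (by norm_num)⟩, rfl⟩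
    rw [Set.eq_empty_iff_forall_notMem] at hsegdisj
    exact hsegdisj _ ⟨hseg, hpt⟩
  -- UNIQUENESS
  obtain ⟨j, hj⟩ := hexist
  refine ⟨j, hj, ?_⟩
  intro j' hj'
  by_contra hne'
  obtain ⟨ε₁, hε₁, h₁⟩ := eps_intrinsic (hcont j') (hc j') (hqspan j') (hqne j') hj'
  obtain ⟨ε₂, hε₂, h₂⟩ := eps_intrinsic (hcont j) (hc j) (hqspan j) (hqne j) hj
  set ε := min ε₁ ε₂ / 2 with hεdef
  have hεpos : 0 < ε := by positivity
  have hεm1 : ε ∈ Set.Ioo (0:ℝ) ε₁ := by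
    constructor
    · exact hεpos
    · calc ε < min ε₁ ε₂ := by rw [hεdef]; linarith [lt_min hε₁ hε₂]
        _ ≤ ε₁ := min_le_left _ _
  have hεm2 : ε ∈ Set.Ioo (0:ℝ) ε₂ := by
    constructor
    · exact hεpos
    · calc ε < min ε₁ ε₂ := by rw [hεdef]; linarith [lt_min hε₁ hε₂]
        _ ≤ ε₂ := min_le_right _ _
  have hd' := hdisj j' j hne'
  rw [Set.eq_empty_iff_forall_notMem] at hd'
  exact hd' (AffineMap.lineMap x q ε) ⟨h₁ ε hεm1, h₂ ε hεm2⟩
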